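/- (Scaling invariance) For every horizon m ≥ 0, every μ ∈ ℝ, every n > 0 and every λ ∈ ℝ, the Gaussian one-armed-bandit value function satisfies V_m(μ, n, γ, τ, λ) = τ^{−1/2} · V_m(√τ·μ, n/τ, γ, 1, √τ·λ). -/

import Mathlib

open MeasureTheory ProbabilityTheory

/-- Finite-horizon value function of the Gaussian one-armed bandit:
`V γ τ m μ n λ`, with discount `γ`, observation precision `τ`, horizon `m`,
posterior state `(μ, n)` and safe-arm reward `λ`. The expectation over the
next observation is taken under the Gaussian predictive distribution
`𝒩(μ, 1/n + 1/τ)`. -/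
noncomputable def V (γ τ : ℝ) : ℕ → ℝ → ℝ → ℝ → ℝ
  | 0, μ, _n, lam => max (μ - lam) 0 / (1 - γ)
  | m + 1, μ, n, lam =>
      max (μ - lam + γ * ∫ y, V γ τ m ((n * μ + τ * y) / (n + τ)) (n + τ) lam
        ∂(gaussianReal μ (1 / n + 1 / τ).toNNReal)) 0

/-- Scaling invariance:
`V_m(μ, n, γ, τ, λ) = τ^{−1/2} · V_m(√τ·μ, n/τ, γ, 1, √τ·λ)`. -/
theorem nmab_scaling_invariance (γ τ : ℝ)
    (hγ0 : 0 ≤ γ) (hγ1 : γ < 1) (hτ : 0 < τ) :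
    ∀ m : ℕ, ∀ μ n lam : ℝ, 0 < n →
      V γ τ m μ n lam =
        (Real.sqrt τ)⁻¹ * V γ 1 m (Real.sqrt τ * μ) (n / τ) (Real.sqrt τ * lam) := by
  have hst : 0 < Real.sqrt τ := Real.sqrt_pos.mpr hτ
  have hst0 : Real.sqrt τ ≠ 0 := hst.ne'
  have hst2 : Real.sqrt τ * Real.sqrt τ = τ := Real.mul_self_sqrt hτ.le
  intro m
  induction m with
  | zero =>
    intro μ n lam hn
    simp only [V]
    have h : Real.sqrt τ * max (μ - lam) 0
        = max (Real.sqrt τ * μ - Real.sqrt τ * lam) 0 := by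
      rw [mul_max_of_nonneg _ _ hst.le, mul_zero, mul_sub]
    rw [← h]
    field_simp
  | succ m ih =>
    intro μ n lam hn
    have hn0 : (0:ℝ) < n + τ := by linarith
    have hnt : (0:ℝ) < n / τ := div_pos hn hτ
    simp only [V]
    have hemb : MeasurableEmbedding (fun y : ℝ => Real.sqrt τ * y) :=
      (Homeomorph.mulLeft₀ _ hst0).toMeasurableEquiv.measurableEmbedding
    have hmap : (gaussianReal μ (1 / n + 1 / τ).toNNReal).map
          (fun y : ℝ => Real.sqrt τ * y)
        = gaussianReal (Real.sqrt τ * μ) (1 / (n / τ) + 1 / 1).toNNReal := by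
      rw [show (fun y : ℝ => Real.sqrt τ * y) = (Real.sqrt τ * ·) from rfl,
        gaussianReal_map_const_mul]
      congr 1
      rw [← NNReal.coe_inj]
      push_cast
      rw [Real.coe_toNNReal _ (by positivity), Real.coe_toNNReal _ (by positivity)]
      have : Real.sqrt τ ^ 2 = τ := Real.sq_sqrt hτ.le
      rw [this]
      field_simp
    rw [← hmap, hemb.integral_map]
    have hI : ∀ y : ℝ, V γ 1 m ((n / τ * (Real.sqrt τ * μ) + 1 * (Real.sqrt τ * y))
          / (n / τ + 1)) (n / τ + 1) (Real.sqrt τ * lam)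
        = Real.sqrt τ * V γ τ m ((n * μ + τ * y) / (n + τ)) (n + τ) lam := by
      intro y
      have hτ0 : τ ≠ 0 := hτ.ne'
      have hnτ0 : n + τ ≠ 0 := hn0.ne'
      have h1 : (n / τ * (Real.sqrt τ * μ) + 1 * (Real.sqrt τ * y)) / (n / τ + 1)
          = Real.sqrt τ * ((n * μ + τ * y) / (n + τ)) := by
        field_simp
      have h2 : n / τ + 1 = (n + τ) / τ := by field_simp
      rw [h1, h2, ih ((n * μ + τ * y) / (n + τ)) (n + τ) lam hn0,
        ← mul_assoc (Real.sqrt τ) (Real.sqrt τ)⁻¹, mul_inv_cancel₀ hst0, one_mul]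
    simp only [hI]
    rw [MeasureTheory.integral_const_mul]
    rw [mul_max_of_nonneg _ _ (inv_nonneg.mpr hst.le), mul_zero]
    congr 1
    field_simp
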